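/- The metric ĝ = dr² + (r²/(1+r²))(dθ² + sin²θ dφ²) on (0,∞) × S² (the non-abelian T-dual of the round S³) has scalar curvature R = 2(r⁴ + 3r² + 9)/(1 + r²)², which is strictly positive for all r. -/

import Mathlib

open scoped BigOperators

noncomputable section

variable {ι : Type} [Fintype ι] [DecidableEq ι]

/-- Partial derivative of a function of coordinates in the `i`-th coordinate direction. -/
def pd (f : (ι → ℝ) → ℝ) (i : ι) (x : ι → ℝ) : ℝ :=
  fderiv ℝ f x (Pi.single i 1)

/-- Christoffel symbols `Γ^k_{ij}` of a coordinate metric `g`. -/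
def christoffel (g : (ι → ℝ) → Matrix ι ι ℝ) (k i j : ι) (x : ι → ℝ) : ℝ :=
  (1/2) * ∑ l, (g x)⁻¹ k l *
    (pd (fun y => g y l j) i x + pd (fun y => g y i l) j x - pd (fun y => g y i j) l x)

/-- Ricci curvature tensor `R_{ij}` of a coordinate metric `g`. -/
def ricci (g : (ι → ℝ) → Matrix ι ι ℝ) (i j : ι) (x : ι → ℝ) : ℝ :=
  (∑ k, pd (christoffel g k i j) k x)
  - (∑ k, pd (christoffel g k k j) i x)
  + (∑ k, ∑ l, christoffel g k k l x * christoffel g l i j x)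
  - (∑ k, ∑ l, christoffel g k i l x * christoffel g l k j x)

/-- Scalar curvature `R = g^{ij} R_{ij}` of a coordinate metric `g`. -/
def scalarCurvature (g : (ι → ℝ) → Matrix ι ι ℝ) (x : ι → ℝ) : ℝ :=
  ∑ i, ∑ j, (g x)⁻¹ i j * ricci g i j x

end

/-- The non-abelian T-dual of the round `S³`, in polar coordinates `x = (r, θ, φ)` on
`su(2)* ≅ ℝ³`:  `ĝ = dr² + (r²/(1+r²))(dθ² + sin²θ dφ²)`. -/
noncomputable def natdS3 : (Fin 3 → ℝ) → Matrix (Fin 3) (Fin 3) ℝ :=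
  fun x => Matrix.diagonal
    ![1, x 0 ^ 2 / (1 + x 0 ^ 2), x 0 ^ 2 / (1 + x 0 ^ 2) * Real.sin (x 1) ^ 2]


namespace NATDaux
open Real

lemma pd_const (c : ℝ) (i : Fin 3) (x : Fin 3 → ℝ) : pd (fun _ => c) i x = 0 := by
  simp [pd]

lemma hasFDerivAt_coord (i : Fin 3) (x : Fin 3 → ℝ) :
    HasFDerivAt (fun y : Fin 3 → ℝ => y i)
      (ContinuousLinearMap.proj i : (Fin 3 → ℝ) →L[ℝ] ℝ) x :=
  (ContinuousLinearMap.proj (R := ℝ) (φ := fun _ : Fin 3 => ℝ) i).hasFDerivAt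

lemma pd_single {u : ℝ → ℝ} {u' : ℝ} {x : Fin 3 → ℝ} (i : Fin 3)
    (h : HasDerivAt u u' (x i)) (j : Fin 3) :
    pd (fun y => u (y i)) j x = if j = i then u' else 0 := by
  have H : HasFDerivAt (fun y : Fin 3 → ℝ => u (y i))
      (u' • (ContinuousLinearMap.proj i : (Fin 3 → ℝ) →L[ℝ] ℝ)) x :=
    h.comp_hasFDerivAt x (hasFDerivAt_coord i x)
  rw [pd, H.fderiv]
  simp [Pi.single_apply, eq_comm]

lemma pd_mul2 {u v : ℝ → ℝ} {u' v' : ℝ} {x : Fin 3 → ℝ}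
    (hu : HasDerivAt u u' (x 0)) (hv : HasDerivAt v v' (x 1)) (j : Fin 3) :
    pd (fun y => u (y 0) * v (y 1)) j x =
      (if j = 0 then u' * v (x 1) else 0) + (if j = 1 then u (x 0) * v' else 0) := by
  have H0 : HasFDerivAt (fun y : Fin 3 → ℝ => u (y 0))
      (u' • (ContinuousLinearMap.proj 0 : (Fin 3 → ℝ) →L[ℝ] ℝ)) x :=
    hu.comp_hasFDerivAt x (hasFDerivAt_coord 0 x)
  have H1 : HasFDerivAt (fun y : Fin 3 → ℝ => v (y 1))
      (v' • (ContinuousLinearMap.proj 1 : (Fin 3 → ℝ) →L[ℝ] ℝ)) x :=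
    hv.comp_hasFDerivAt x (hasFDerivAt_coord 1 x)
  have H := H0.mul H1
  rw [pd, show (fun y : Fin 3 → ℝ => u (y 0) * v (y 1)) = (fun y => u (y 0)) * (fun y => v (y 1)) from rfl, H.fderiv]
  simp [Pi.single_apply, eq_comm]
  split_ifs <;> ring

lemma hd_F (r : ℝ) : HasDerivAt (fun t : ℝ => t^2/(1+t^2)) (2*r/(1+r^2)^2) r := by
  have h1 : HasDerivAt (fun t : ℝ => t^2) (2*r) r := by simpa using hasDerivAt_pow 2 r
  have h2 : HasDerivAt (fun t : ℝ => 1+t^2) (2*r) r := h1.const_add 1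
  have hne : (1:ℝ) + r^2 ≠ 0 := by positivity
  have := h1.div h2 hne
  refine this.congr_deriv ?_
  field_simp; ring

lemma hd_sin2 (t : ℝ) : HasDerivAt (fun u : ℝ => Real.sin u ^ 2) (2*Real.sin t*Real.cos t) t := by
  have := (Real.hasDerivAt_sin t).pow 2
  refine this.congr_deriv ?_; ring

lemma hd_A (r : ℝ) : HasDerivAt (fun t : ℝ => -(t/(1+t^2)^2)) ((3*r^2-1)/(1+r^2)^3) r := by
  have h1 : HasDerivAt (fun t : ℝ => t^2) (2*r) r := by simpa using hasDerivAt_pow 2 r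
  have h2 : HasDerivAt (fun t : ℝ => 1+t^2) (2*r) r := h1.const_add 1
  have h3 : HasDerivAt (fun t : ℝ => (1+t^2)^2) (2*(1+r^2)*(2*r)) r := by
    have := h2.pow 2
    refine this.congr_deriv ?_; ring
  have hne : ((1:ℝ)+r^2)^2 ≠ 0 := by positivity
  have := ((hasDerivAt_id r).div h3 hne).neg
  refine this.congr_deriv ?_
  have hne2 : (1:ℝ)+r^2 ≠ 0 := by positivity
  field_simp; simp only [id]; ring

lemma hd_Q {r : ℝ} (hr : r ≠ 0) :
    HasDerivAt (fun t : ℝ => 1/(t*(1+t^2))) (-(1+3*r^2)/(r*(1+r^2))^2) r := by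
  have h1 : HasDerivAt (fun t : ℝ => t^2) (2*r) r := by simpa using hasDerivAt_pow 2 r
  have h2 : HasDerivAt (fun t : ℝ => 1+t^2) (2*r) r := h1.const_add 1
  have hw : HasDerivAt (fun t : ℝ => t*(1+t^2)) (1*(1+r^2) + r*(2*r)) r :=
    (hasDerivAt_id r).mul h2
  have hne2 : (1:ℝ)+r^2 ≠ 0 := by positivity
  have hne : r*(1+r^2) ≠ 0 := mul_ne_zero hr hne2
  have := (hasDerivAt_const r (1:ℝ)).div hw hne
  refine this.congr_deriv ?_
  field_simp; ring

lemma hd_cot {t : ℝ} (hs : Real.sin t ≠ 0) :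
    HasDerivAt (fun u : ℝ => Real.cos u / Real.sin u) (-1/Real.sin t^2) t := by
  have := (Real.hasDerivAt_cos t).div (Real.hasDerivAt_sin t) hs
  refine this.congr_deriv ?_
  have h : -Real.sin t * Real.sin t - Real.cos t * Real.cos t = -1 := by
    have := Real.sin_sq_add_cos_sq t
    nlinarith
  rw [h]

lemma hd_msc (t : ℝ) :
    HasDerivAt (fun u : ℝ => -(Real.sin u * Real.cos u)) (Real.sin t^2 - Real.cos t^2) t := by
  have := ((Real.hasDerivAt_sin t).mul (Real.hasDerivAt_cos t)).neg
  refine this.congr_deriv ?_; ring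

lemma fin3_cases (a : Fin 3) : a = 0 ∨ a = 1 ∨ a = 2 := by omega

-- metric entry function lemmas
lemma hg00 : (fun z : Fin 3 → ℝ => natdS3 z 0 0) = fun _ => (1:ℝ) := by
  funext z; simp [natdS3]
lemma hg11 : (fun z : Fin 3 → ℝ => natdS3 z 1 1) = fun z => (z 0)^2/(1+(z 0)^2) := by
  funext z; simp [natdS3]
lemma hg22 : (fun z : Fin 3 → ℝ => natdS3 z 2 2) =
    fun z => (z 0)^2/(1+(z 0)^2) * Real.sin (z 1)^2 := by
  funext z; simp [natdS3]
lemma hg01 : (fun z : Fin 3 → ℝ => natdS3 z 0 1) = fun _ => (0:ℝ) := by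
  funext z; simp [natdS3, Matrix.diagonal_apply_ne]
lemma hg02 : (fun z : Fin 3 → ℝ => natdS3 z 0 2) = fun _ => (0:ℝ) := by
  funext z; simp [natdS3, Matrix.diagonal_apply_ne]
lemma hg10 : (fun z : Fin 3 → ℝ => natdS3 z 1 0) = fun _ => (0:ℝ) := by
  funext z; simp [natdS3, Matrix.diagonal_apply_ne]
lemma hg12 : (fun z : Fin 3 → ℝ => natdS3 z 1 2) = fun _ => (0:ℝ) := by
  funext z; simp [natdS3, Matrix.diagonal_apply_ne]
lemma hg20 : (fun z : Fin 3 → ℝ => natdS3 z 2 0) = fun _ => (0:ℝ) := by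
  funext z; simp [natdS3, Matrix.diagonal_apply_ne]
lemma hg21 : (fun z : Fin 3 → ℝ => natdS3 z 2 1) = fun _ => (0:ℝ) := by
  funext z; simp [natdS3, Matrix.diagonal_apply_ne]

lemma inv_natdS3 (y : Fin 3 → ℝ) (h0 : y 0 ≠ 0) (h1 : Real.sin (y 1) ≠ 0) :
    (natdS3 y)⁻¹ = Matrix.diagonal
      ![1, (1+(y 0)^2)/(y 0)^2, (1+(y 0)^2)/((y 0)^2 * Real.sin (y 1)^2)] := by
  have hne : (1:ℝ) + (y 0)^2 ≠ 0 := by positivity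
  apply Matrix.inv_eq_right_inv
  rw [natdS3, Matrix.diagonal_mul_diagonal]
  ext i j
  rw [Matrix.diagonal_apply, Matrix.one_apply]
  fin_cases i <;> fin_cases j <;> simp <;> field_simp

noncomputable def zf : (Fin 3 → ℝ) → ℝ := fun _ => 0

noncomputable def Gam : Fin 3 → Fin 3 → Fin 3 → (Fin 3 → ℝ) → ℝ :=
  ![![![zf, zf, zf],
     ![zf, fun y => -(y 0/(1+(y 0)^2)^2), zf],
     ![zf, zf, fun y => -(y 0/(1+(y 0)^2)^2) * Real.sin (y 1)^2]],
    ![![zf, fun y => 1/(y 0*(1+(y 0)^2)), zf],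
     ![fun y => 1/(y 0*(1+(y 0)^2)), zf, zf],
     ![zf, zf, fun y => -(Real.sin (y 1) * Real.cos (y 1))]],
    ![![zf, zf, fun y => 1/(y 0*(1+(y 0)^2))],
     ![zf, zf, fun y => Real.cos (y 1) / Real.sin (y 1)],
     ![fun y => 1/(y 0*(1+(y 0)^2)), fun y => Real.cos (y 1) / Real.sin (y 1), zf]]]

lemma gam000 : Gam 0 0 0 = (zf : (Fin 3 → ℝ) → ℝ) := rfl
lemma gam001 : Gam 0 0 1 = (zf : (Fin 3 → ℝ) → ℝ) := rfl
lemma gam002 : Gam 0 0 2 = (zf : (Fin 3 → ℝ) → ℝ) := rfl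
lemma gam010 : Gam 0 1 0 = (zf : (Fin 3 → ℝ) → ℝ) := rfl
lemma gam011 : Gam 0 1 1 = (fun y => -(y 0/(1+(y 0)^2)^2) : (Fin 3 → ℝ) → ℝ) := rfl
lemma gam012 : Gam 0 1 2 = (zf : (Fin 3 → ℝ) → ℝ) := rfl
lemma gam020 : Gam 0 2 0 = (zf : (Fin 3 → ℝ) → ℝ) := rfl
lemma gam021 : Gam 0 2 1 = (zf : (Fin 3 → ℝ) → ℝ) := rfl
lemma gam022 : Gam 0 2 2 = (fun y => -(y 0/(1+(y 0)^2)^2) * Real.sin (y 1)^2 : (Fin 3 → ℝ) → ℝ) := rfl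
lemma gam100 : Gam 1 0 0 = (zf : (Fin 3 → ℝ) → ℝ) := rfl
lemma gam101 : Gam 1 0 1 = (fun y => 1/(y 0*(1+(y 0)^2)) : (Fin 3 → ℝ) → ℝ) := rfl
lemma gam102 : Gam 1 0 2 = (zf : (Fin 3 → ℝ) → ℝ) := rfl
lemma gam110 : Gam 1 1 0 = (fun y => 1/(y 0*(1+(y 0)^2)) : (Fin 3 → ℝ) → ℝ) := rfl
lemma gam111 : Gam 1 1 1 = (zf : (Fin 3 → ℝ) → ℝ) := rfl
lemma gam112 : Gam 1 1 2 = (zf : (Fin 3 → ℝ) → ℝ) := rfl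
lemma gam120 : Gam 1 2 0 = (zf : (Fin 3 → ℝ) → ℝ) := rfl
lemma gam121 : Gam 1 2 1 = (zf : (Fin 3 → ℝ) → ℝ) := rfl
lemma gam122 : Gam 1 2 2 = (fun y => -(Real.sin (y 1) * Real.cos (y 1)) : (Fin 3 → ℝ) → ℝ) := rfl
lemma gam200 : Gam 2 0 0 = (zf : (Fin 3 → ℝ) → ℝ) := rfl
lemma gam201 : Gam 2 0 1 = (zf : (Fin 3 → ℝ) → ℝ) := rfl
lemma gam202 : Gam 2 0 2 = (fun y => 1/(y 0*(1+(y 0)^2)) : (Fin 3 → ℝ) → ℝ) := rfl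
lemma gam210 : Gam 2 1 0 = (zf : (Fin 3 → ℝ) → ℝ) := rfl
lemma gam211 : Gam 2 1 1 = (zf : (Fin 3 → ℝ) → ℝ) := rfl
lemma gam212 : Gam 2 1 2 = (fun y => Real.cos (y 1) / Real.sin (y 1) : (Fin 3 → ℝ) → ℝ) := rfl
lemma gam220 : Gam 2 2 0 = (fun y => 1/(y 0*(1+(y 0)^2)) : (Fin 3 → ℝ) → ℝ) := rfl
lemma gam221 : Gam 2 2 1 = (fun y => Real.cos (y 1) / Real.sin (y 1) : (Fin 3 → ℝ) → ℝ) := rfl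
lemma gam222 : Gam 2 2 2 = (zf : (Fin 3 → ℝ) → ℝ) := rfl

lemma pd_zf (i : Fin 3) (x : Fin 3 → ℝ) : pd zf i x = 0 := pd_const 0 i x

@[simp] lemma zf_apply (z : Fin 3 → ℝ) : zf z = 0 := rfl

lemma christoffel_eq (y : Fin 3 → ℝ) (h0 : y 0 ≠ 0) (h1 : Real.sin (y 1) ≠ 0)
    (k i j : Fin 3) : christoffel natdS3 k i j y = Gam k i j y := by
  have hne : (1:ℝ) + (y 0)^2 ≠ 0 := by positivity
  rcases fin3_cases k with rfl|rfl|rfl <;> rcases fin3_cases i with rfl|rfl|rfl <;>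
    rcases fin3_cases j with rfl|rfl|rfl <;>
  · rw [christoffel]
    rw [Fin.sum_univ_three, inv_natdS3 y h0 h1]
    simp only [hg00, hg01, hg02, hg10, hg11, hg12, hg20, hg21, hg22, gam000, gam001, gam002, gam010, gam011, gam012, gam020, gam021, gam022, gam100, gam101, gam102, gam110, gam111, gam112, gam120, gam121, gam122, gam200, gam201, gam202, gam210, gam211, gam212, gam220, gam221, gam222,
      zf]
    simp [pd_const, pd_single 0 (hd_F (y 0)), pd_mul2 (hd_F (y 0)) (hd_sin2 (y 1)),
      Matrix.diagonal_apply]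
    try field_simp
    try ring

end NATDaux

/-- The non-abelian T-dual metric of the round `S³` has scalar curvature
`R = 2(r⁴ + 3r² + 9)/(1 + r²)²`, which is strictly positive for all `r`. -/
theorem natdS3_scalar_curvature :
    (∀ x : Fin 3 → ℝ, 0 < x 0 → x 1 ∈ Set.Ioo (0 : ℝ) Real.pi →
      scalarCurvature natdS3 x
        = 2 * ((x 0) ^ 4 + 3 * (x 0) ^ 2 + 9) / (1 + (x 0) ^ 2) ^ 2) ∧
    ∀ r : ℝ, 0 < 2 * (r ^ 4 + 3 * r ^ 2 + 9) / (1 + r ^ 2) ^ 2 := by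
  constructor
  · intro x hr hθ
    have h0 : x 0 ≠ 0 := ne_of_gt hr
    have hs0 : 0 < Real.sin (x 1) := Real.sin_pos_of_pos_of_lt_pi hθ.1 hθ.2
    have hs : Real.sin (x 1) ≠ 0 := ne_of_gt hs0
    have hne : (1:ℝ) + (x 0)^2 ≠ 0 := by positivity
    have hU : IsOpen {y : Fin 3 → ℝ | y 0 ≠ 0 ∧ Real.sin (y 1) ≠ 0} := by
      have h1 : IsOpen {y : Fin 3 → ℝ | y 0 ≠ 0} := isOpen_ne.preimage (continuous_apply 0)
      have h2 : IsOpen {y : Fin 3 → ℝ | Real.sin (y 1) ≠ 0} :=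
        isOpen_ne.preimage (Real.continuous_sin.comp (continuous_apply 1))
      exact h1.inter h2
    have hmem : {y : Fin 3 → ℝ | y 0 ≠ 0 ∧ Real.sin (y 1) ≠ 0} ∈ nhds x :=
      hU.mem_nhds ⟨h0, hs⟩
    have hpd : ∀ k i j d : Fin 3,
        pd (christoffel natdS3 k i j) d x = pd (NATDaux.Gam k i j) d x := by
      intro k i j d
      have hev : christoffel natdS3 k i j =ᶠ[nhds x] NATDaux.Gam k i j := by
        filter_upwards [hmem] with y hy
        exact NATDaux.christoffel_eq y hy.1 hy.2 k i j
      rw [pd, pd, hev.fderiv_eq]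
    have R00 : ricci natdS3 0 0 x = 6/(1+(x 0)^2)^2 := by
      simp only [ricci, Fin.sum_univ_three, hpd, NATDaux.gam000, NATDaux.gam001, NATDaux.gam002, NATDaux.gam010, NATDaux.gam011, NATDaux.gam012, NATDaux.gam020, NATDaux.gam021, NATDaux.gam022, NATDaux.gam100, NATDaux.gam101, NATDaux.gam102, NATDaux.gam110, NATDaux.gam111, NATDaux.gam112, NATDaux.gam120, NATDaux.gam121, NATDaux.gam122, NATDaux.gam200, NATDaux.gam201, NATDaux.gam202, NATDaux.gam210, NATDaux.gam211, NATDaux.gam212, NATDaux.gam220, NATDaux.gam221, NATDaux.gam222]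
      simp only [NATDaux.pd_zf, NATDaux.pd_const,
        NATDaux.pd_single 0 (NATDaux.hd_A (x 0)),
        NATDaux.pd_single 0 (NATDaux.hd_Q h0),
        NATDaux.pd_single 1 (NATDaux.hd_cot hs),
        NATDaux.pd_single 1 (NATDaux.hd_msc (x 1)),
        NATDaux.pd_mul2 (NATDaux.hd_A (x 0)) (NATDaux.hd_sin2 (x 1))]
      simp [NATDaux.christoffel_eq x h0 hs, NATDaux.gam000, NATDaux.gam001, NATDaux.gam002, NATDaux.gam010, NATDaux.gam011, NATDaux.gam012, NATDaux.gam020, NATDaux.gam021, NATDaux.gam022, NATDaux.gam100, NATDaux.gam101, NATDaux.gam102, NATDaux.gam110, NATDaux.gam111, NATDaux.gam112, NATDaux.gam120, NATDaux.gam121, NATDaux.gam122, NATDaux.gam200, NATDaux.gam201, NATDaux.gam202, NATDaux.gam210, NATDaux.gam211, NATDaux.gam212, NATDaux.gam220, NATDaux.gam221, NATDaux.gam222, NATDaux.zf_apply]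
      try ring_nf
      try simp only [Real.cos_sq']
      try field_simp
      try ring
      try nlinarith [Real.sin_sq_add_cos_sq (x 1), sq_nonneg (Real.sin (x 1)), hs0, hr]
    have R11 : ricci natdS3 1 1 x = (3*(x 0)^2-1)/(1+(x 0)^2)^3 + 1 := by
      simp only [ricci, Fin.sum_univ_three, hpd, NATDaux.gam000, NATDaux.gam001, NATDaux.gam002, NATDaux.gam010, NATDaux.gam011, NATDaux.gam012, NATDaux.gam020, NATDaux.gam021, NATDaux.gam022, NATDaux.gam100, NATDaux.gam101, NATDaux.gam102, NATDaux.gam110, NATDaux.gam111, NATDaux.gam112, NATDaux.gam120, NATDaux.gam121, NATDaux.gam122, NATDaux.gam200, NATDaux.gam201, NATDaux.gam202, NATDaux.gam210, NATDaux.gam211, NATDaux.gam212, NATDaux.gam220, NATDaux.gam221, NATDaux.gam222]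
      simp only [NATDaux.pd_zf, NATDaux.pd_const,
        NATDaux.pd_single 0 (NATDaux.hd_A (x 0)),
        NATDaux.pd_single 0 (NATDaux.hd_Q h0),
        NATDaux.pd_single 1 (NATDaux.hd_cot hs),
        NATDaux.pd_single 1 (NATDaux.hd_msc (x 1)),
        NATDaux.pd_mul2 (NATDaux.hd_A (x 0)) (NATDaux.hd_sin2 (x 1))]
      simp [NATDaux.christoffel_eq x h0 hs, NATDaux.gam000, NATDaux.gam001, NATDaux.gam002, NATDaux.gam010, NATDaux.gam011, NATDaux.gam012, NATDaux.gam020, NATDaux.gam021, NATDaux.gam022, NATDaux.gam100, NATDaux.gam101, NATDaux.gam102, NATDaux.gam110, NATDaux.gam111, NATDaux.gam112, NATDaux.gam120, NATDaux.gam121, NATDaux.gam122, NATDaux.gam200, NATDaux.gam201, NATDaux.gam202, NATDaux.gam210, NATDaux.gam211, NATDaux.gam212, NATDaux.gam220, NATDaux.gam221, NATDaux.gam222, NATDaux.zf_apply]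
      try ring_nf
      try simp only [Real.cos_sq']
      try field_simp
      try ring
      try nlinarith [Real.sin_sq_add_cos_sq (x 1), sq_nonneg (Real.sin (x 1)), hs0, hr]
    have R22 : ricci natdS3 2 2 x =
        Real.sin (x 1)^2 * ((3*(x 0)^2-1)/(1+(x 0)^2)^3 + 1) := by
      simp only [ricci, Fin.sum_univ_three, hpd, NATDaux.gam000, NATDaux.gam001, NATDaux.gam002, NATDaux.gam010, NATDaux.gam011, NATDaux.gam012, NATDaux.gam020, NATDaux.gam021, NATDaux.gam022, NATDaux.gam100, NATDaux.gam101, NATDaux.gam102, NATDaux.gam110, NATDaux.gam111, NATDaux.gam112, NATDaux.gam120, NATDaux.gam121, NATDaux.gam122, NATDaux.gam200, NATDaux.gam201, NATDaux.gam202, NATDaux.gam210, NATDaux.gam211, NATDaux.gam212, NATDaux.gam220, NATDaux.gam221, NATDaux.gam222]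
      simp only [NATDaux.pd_zf, NATDaux.pd_const,
        NATDaux.pd_single 0 (NATDaux.hd_A (x 0)),
        NATDaux.pd_single 0 (NATDaux.hd_Q h0),
        NATDaux.pd_single 1 (NATDaux.hd_cot hs),
        NATDaux.pd_single 1 (NATDaux.hd_msc (x 1)),
        NATDaux.pd_mul2 (NATDaux.hd_A (x 0)) (NATDaux.hd_sin2 (x 1))]
      simp [NATDaux.christoffel_eq x h0 hs, NATDaux.gam000, NATDaux.gam001, NATDaux.gam002, NATDaux.gam010, NATDaux.gam011, NATDaux.gam012, NATDaux.gam020, NATDaux.gam021, NATDaux.gam022, NATDaux.gam100, NATDaux.gam101, NATDaux.gam102, NATDaux.gam110, NATDaux.gam111, NATDaux.gam112, NATDaux.gam120, NATDaux.gam121, NATDaux.gam122, NATDaux.gam200, NATDaux.gam201, NATDaux.gam202, NATDaux.gam210, NATDaux.gam211, NATDaux.gam212, NATDaux.gam220, NATDaux.gam221, NATDaux.gam222, NATDaux.zf_apply]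
      try ring_nf
      try simp only [Real.cos_sq']
      try field_simp
      try ring
      try nlinarith [Real.sin_sq_add_cos_sq (x 1), sq_nonneg (Real.sin (x 1)), hs0, hr]
    rw [scalarCurvature]
    simp only [Fin.sum_univ_three]
    rw [NATDaux.inv_natdS3 x h0 hs]
    simp [Matrix.diagonal_apply, R00, R11, R22]
    field_simp
    ring
  · intro r
    positivity
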